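/- Let n = 2 and β = a₁ + a₂ ≥ 1, and let f′_ℓ(x) = λ (d₂ x₁ − d₁ x₂)^β. Then every function g : ℝ₊² → ℝ that is convex on W₁₂ and satisfies g(x) ≤ x₁^{a₁} x₂^{a₂} for all x ∈ W₁₂ also satisfies g(x) ≤ f′_ℓ(x) for all x ∈ W₁₂; together with the facts that f′_ℓ is convex on W₁₂, is a minorant of f on W₁₂, and agrees with f on the rays x₂ = p x₁ and x₂ = q x₁, this says f′_ℓ is the lower envelope of f over W₁₂. -/

import Mathlib

open Real

/-- For `n = 2` and `β = a₁ + a₂ ≥ 1`, `f′_ℓ(x) = λ (d₂ x₁ − d₁ x₂)^β`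
is the lower envelope of `f` over `W₁₂`: it is convex on `W₁₂`, a minorant of `f` on
`W₁₂`, agrees with `f` on the rays `x₂ = p x₁` and `x₂ = q x₁`, and dominates every
convex minorant of `f` on `W₁₂`. -/
private lemma wedgeConvex (p q : ℝ) :
    Convex ℝ {x : ℝ × ℝ | 0 ≤ x.1 ∧ 0 ≤ x.2 ∧ p * x.1 ≤ x.2 ∧ x.2 ≤ q * x.1} := by
  rintro ⟨x₁, x₂⟩ ⟨hx1, hx2, hxl, hxr⟩ ⟨y₁, y₂⟩ ⟨hy1, hy2, hyl, hyr⟩ a b ha hb hab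
  simp only [Set.mem_setOf_eq, Prod.smul_mk, Prod.mk_add_mk, smul_eq_mul] at *
  have k1 := mul_le_mul_of_nonneg_left hxl ha
  have k2 := mul_le_mul_of_nonneg_left hyl hb
  have k3 := mul_le_mul_of_nonneg_left hxr ha
  have k4 := mul_le_mul_of_nonneg_left hyr hb
  refine ⟨by positivity, by positivity, by nlinarith [k1, k2], by nlinarith [k3, k4]⟩

theorem lower_envelope_W12_of_one_le_beta (a₁ a₂ p q β d₁ d₂ lam : ℝ)
    (ha₁ : 0 < a₁) (ha₂ : 0 < a₂) (hβ : β = a₁ + a₂) (hβ1 : 1 ≤ β)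
    (hp : 0 < p) (hpq : p < q)
    (hd₁ : d₁ = q ^ (-(a₂ / β)) - p ^ (-(a₂ / β)))
    (hd₂ : d₂ = q ^ (a₁ / β) - p ^ (a₁ / β))
    (hlam : lam = p ^ a₂ / (d₂ - d₁ * p) ^ β) :
    ConvexOn ℝ {x : ℝ × ℝ | 0 ≤ x.1 ∧ 0 ≤ x.2 ∧ p * x.1 ≤ x.2 ∧ x.2 ≤ q * x.1}
      (fun x : ℝ × ℝ => lam * (d₂ * x.1 - d₁ * x.2) ^ β) ∧
    (∀ x : ℝ × ℝ, (0 ≤ x.1 ∧ 0 ≤ x.2 ∧ p * x.1 ≤ x.2 ∧ x.2 ≤ q * x.1) →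
      lam * (d₂ * x.1 - d₁ * x.2) ^ β ≤ x.1 ^ a₁ * x.2 ^ a₂) ∧
    (∀ x : ℝ × ℝ, 0 ≤ x.1 → 0 ≤ x.2 → (x.2 = p * x.1 ∨ x.2 = q * x.1) →
      lam * (d₂ * x.1 - d₁ * x.2) ^ β = x.1 ^ a₁ * x.2 ^ a₂) ∧
    (∀ g : ℝ × ℝ → ℝ,
      ConvexOn ℝ {x : ℝ × ℝ | 0 ≤ x.1 ∧ 0 ≤ x.2 ∧ p * x.1 ≤ x.2 ∧ x.2 ≤ q * x.1} g →
      (∀ x : ℝ × ℝ, (0 ≤ x.1 ∧ 0 ≤ x.2 ∧ p * x.1 ≤ x.2 ∧ x.2 ≤ q * x.1) →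
        g x ≤ x.1 ^ a₁ * x.2 ^ a₂) →
      ∀ x : ℝ × ℝ, (0 ≤ x.1 ∧ 0 ≤ x.2 ∧ p * x.1 ≤ x.2 ∧ x.2 ≤ q * x.1) →
        g x ≤ lam * (d₂ * x.1 - d₁ * x.2) ^ β) := by
  have hq : 0 < q := hp.trans hpq
  have hβ0 : (0:ℝ) < β := lt_of_lt_of_le one_pos hβ1
  have hγ0 : 0 < a₂ / β := div_pos ha₂ hβ0
  have hγ1 : a₂ / β < 1 := (div_lt_one hβ0).2 (by linarith)
  have hγ'0 : 0 < a₁ / β := div_pos ha₁ hβ0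
  have hqp : 0 < q - p := sub_pos.2 hpq
  have hd₂0 : 0 < d₂ := by
    rw [hd₂]
    have := Real.rpow_lt_rpow hp.le hpq hγ'0
    linarith
  have hd₁0 : d₁ < 0 := by
    rw [hd₁]
    have := Real.rpow_lt_rpow_of_neg hp hpq (neg_neg_of_pos hγ0)
    linarith
  have hexp : a₁ / β = 1 + -(a₂ / β) := by field_simp; linarith
  have e1 : d₂ - d₁ * p = q ^ (-(a₂/β)) * (q - p) := by
    rw [hd₁, hd₂, hexp, Real.rpow_add hq, Real.rpow_add hp, Real.rpow_one, Real.rpow_one]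
    ring
  have e2 : d₂ - d₁ * q = p ^ (-(a₂/β)) * (q - p) := by
    rw [hd₁, hd₂, hexp, Real.rpow_add hq, Real.rpow_add hp, Real.rpow_one, Real.rpow_one]
    ring
  have hup : 0 < d₂ - d₁ * p := by
    rw [e1]; exact mul_pos (Real.rpow_pos_of_pos hq _) hqp
  have huq : 0 < d₂ - d₁ * q := by
    rw [e2]; exact mul_pos (Real.rpow_pos_of_pos hp _) hqp
  have hlam0 : 0 < lam := by
    rw [hlam]; exact div_pos (Real.rpow_pos_of_pos hp _) (Real.rpow_pos_of_pos hup _)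
  have hvp : lam * (d₂ - d₁ * p) ^ β = p ^ a₂ := by
    rw [hlam, div_mul_cancel₀ _ (Real.rpow_pos_of_pos hup β).ne']
  have powk : ∀ r : ℝ, 0 < r → (r ^ (-(a₂/β))) ^ β = r ^ (-a₂) := by
    intro r hr
    rw [← Real.rpow_mul hr.le]
    congr 1
    field_simp
  have h1β : (d₂ - d₁ * p) ^ β = q ^ (-a₂) * (q - p) ^ β := by
    rw [e1, Real.mul_rpow (Real.rpow_nonneg hq.le _) hqp.le, powk q hq]
  have h2β : (d₂ - d₁ * q) ^ β = p ^ (-a₂) * (q - p) ^ β := by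
    rw [e2, Real.mul_rpow (Real.rpow_nonneg hp.le _) hqp.le, powk p hp]
  have hvq : lam * (d₂ - d₁ * q) ^ β = q ^ a₂ := by
    rw [hlam, h1β, h2β, Real.rpow_neg hq.le, Real.rpow_neg hp.le]
    have hpa : (0:ℝ) < p ^ a₂ := Real.rpow_pos_of_pos hp _
    have hqa : (0:ℝ) < q ^ a₂ := Real.rpow_pos_of_pos hq _
    have hqpb : (0:ℝ) < (q - p) ^ β := Real.rpow_pos_of_pos hqp _
    field_simp
  -- ray equality
  have hray : ∀ x : ℝ × ℝ, 0 ≤ x.1 → 0 ≤ x.2 → (x.2 = p * x.1 ∨ x.2 = q * x.1) →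
      lam * (d₂ * x.1 - d₁ * x.2) ^ β = x.1 ^ a₁ * x.2 ^ a₂ := by
    have key : ∀ r : ℝ, 0 < r → lam * (d₂ - d₁ * r) ^ β = r ^ a₂ →
        ∀ x₁ : ℝ, 0 ≤ x₁ →
        lam * (d₂ * x₁ - d₁ * (r * x₁)) ^ β = x₁ ^ a₁ * (r * x₁) ^ a₂ := by
      intro r hr hv x₁ hx₁
      have hur : 0 < d₂ - d₁ * r := by
        have : d₁ * r ≤ 0 := mul_nonpos_of_nonpos_of_nonneg hd₁0.le hr.le
        linarith
      have harg : d₂ * x₁ - d₁ * (r * x₁) = (d₂ - d₁ * r) * x₁ := by ring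
      rw [harg, Real.mul_rpow hur.le hx₁, ← mul_assoc, hv,
        Real.mul_rpow hr.le hx₁, hβ,
        Real.rpow_add' hx₁ (by rw [← hβ]; exact hβ0.ne')]
      ring
    rintro ⟨x₁, x₂⟩ hx1 hx2 (h | h) <;> simp only at h hx1 hx2 ⊢ <;> subst h
    · exact key p hp hvp x₁ hx1
    · exact key q hq hvq x₁ hx1
  -- minorant
  have hmin : ∀ x : ℝ × ℝ, (0 ≤ x.1 ∧ 0 ≤ x.2 ∧ p * x.1 ≤ x.2 ∧ x.2 ≤ q * x.1) →
      lam * (d₂ * x.1 - d₁ * x.2) ^ β ≤ x.1 ^ a₁ * x.2 ^ a₂ := by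
    rintro ⟨x₁, x₂⟩ ⟨hx1, hx2, hl, hr⟩
    simp only at *
    rcases eq_or_lt_of_le hx1 with h0 | h0
    · have hx2' : x₂ ≤ 0 := by rw [← h0, mul_zero] at hr; exact hr
      have hx20 : x₂ = 0 := le_antisymm hx2' hx2
      rw [hx20, ← h0]
      simp [Real.zero_rpow hβ0.ne', Real.zero_rpow ha₂.ne']
    · set t := x₂ / x₁ with ht
      have htp : p ≤ t := (le_div_iff₀ h0).2 (by linarith)
      have htq : t ≤ q := (div_le_iff₀ h0).2 (by linarith)
      have ht0 : 0 < t := lt_of_lt_of_le hp htp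
      set c := (p * q) ^ (a₂ / β) / (q - p) with hc
      have hc0 : 0 < c := div_pos (Real.rpow_pos_of_pos (mul_pos hp hq) _) hqp
      have hcp : c * (d₂ - d₁ * p) = p ^ (a₂ / β) := by
        rw [e1, hc, Real.mul_rpow hp.le hq.le, Real.rpow_neg hq.le]
        have : (0:ℝ) < q ^ (a₂ / β) := Real.rpow_pos_of_pos hq _
        field_simp
      have hcq : c * (d₂ - d₁ * q) = q ^ (a₂ / β) := by
        rw [e2, hc, Real.mul_rpow hp.le hq.le, Real.rpow_neg hp.le]
        have : (0:ℝ) < p ^ (a₂ / β) := Real.rpow_pos_of_pos hp _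
        field_simp
      have hcβ : c ^ β = lam := by
        rw [hc, Real.div_rpow (Real.rpow_nonneg (mul_pos hp hq).le _) hqp.le,
          ← Real.rpow_mul (mul_pos hp hq).le, div_mul_cancel₀ _ hβ0.ne',
          Real.mul_rpow hp.le hq.le, hlam, h1β, Real.rpow_neg hq.le]
        have hqa : (0:ℝ) < q ^ a₂ := Real.rpow_pos_of_pos hq _
        have hqpb : (0:ℝ) < (q - p) ^ β := Real.rpow_pos_of_pos hqp _
        field_simp
      have hcon : ConcaveOn ℝ (Set.Ici 0) (fun s : ℝ => s ^ (a₂ / β)) :=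
        (Real.strictConcaveOn_rpow hγ0 hγ1).concaveOn
      set μ := (q - t) / (q - p) with hμdef
      set ν := (t - p) / (q - p) with hνdef
      have hμ : 0 ≤ μ := div_nonneg (by linarith) hqp.le
      have hν : 0 ≤ ν := div_nonneg (by linarith) hqp.le
      have hμν : μ + ν = 1 := by
        rw [hμdef, hνdef]; field_simp; ring
      have hcomb : μ * p + ν * q = t := by
        rw [hμdef, hνdef]; field_simp; ring
      have hchord : μ * p ^ (a₂ / β) + ν * q ^ (a₂ / β) ≤ t ^ (a₂ / β) := by
        have := hcon.2 (Set.mem_Ici.2 hp.le) (Set.mem_Ici.2 hq.le) hμ hν hμν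
        simpa [smul_eq_mul, hcomb] using this
      have hlin : d₂ - d₁ * t = μ * (d₂ - d₁ * p) + ν * (d₂ - d₁ * q) := by
        linear_combination (-d₂) * hμν + d₁ * hcomb
      have h1 : c * (d₂ - d₁ * t) ≤ t ^ (a₂ / β) := by
        calc c * (d₂ - d₁ * t) = μ * (c * (d₂ - d₁ * p)) + ν * (c * (d₂ - d₁ * q)) := by
              rw [hlin]; ring
          _ = μ * p ^ (a₂ / β) + ν * q ^ (a₂ / β) := by rw [hcp, hcq]
          _ ≤ t ^ (a₂ / β) := hchord
      have hut : 0 < d₂ - d₁ * t := by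
        have : d₁ * t ≤ d₁ * p := mul_le_mul_of_nonpos_left htp hd₁0.le
        linarith
      have h2 : (c * (d₂ - d₁ * t)) ^ β ≤ (t ^ (a₂ / β)) ^ β :=
        Real.rpow_le_rpow (by positivity) h1 hβ0.le
      have h3 : lam * (d₂ - d₁ * t) ^ β ≤ t ^ a₂ := by
        rw [Real.mul_rpow hc0.le hut.le, hcβ, ← Real.rpow_mul ht0.le,
          div_mul_cancel₀ _ hβ0.ne'] at h2
        exact h2
      have hx2t : x₂ = t * x₁ := by
        rw [ht]; field_simp
      calc lam * (d₂ * x₁ - d₁ * x₂) ^ β = lam * (d₂ - d₁ * t) ^ β * x₁ ^ β := by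
            rw [hx2t, show d₂ * x₁ - d₁ * (t * x₁) = (d₂ - d₁ * t) * x₁ from by ring,
              Real.mul_rpow hut.le h0.le]
            ring
        _ ≤ t ^ a₂ * x₁ ^ β :=
            mul_le_mul_of_nonneg_right h3 (Real.rpow_nonneg h0.le β)
        _ = x₁ ^ a₁ * x₂ ^ a₂ := by
            rw [hx2t, Real.mul_rpow ht0.le h0.le, hβ, Real.rpow_add h0]
            ring
  -- convexity of the wedge
  have hWconv : Convex ℝ {x : ℝ × ℝ | 0 ≤ x.1 ∧ 0 ≤ x.2 ∧ p * x.1 ≤ x.2 ∧ x.2 ≤ q * x.1} :=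
    wedgeConvex p q
  -- convexity of f'
  have hconvex : ConvexOn ℝ {x : ℝ × ℝ | 0 ≤ x.1 ∧ 0 ≤ x.2 ∧ p * x.1 ≤ x.2 ∧ x.2 ≤ q * x.1}
      (fun x : ℝ × ℝ => lam * (d₂ * x.1 - d₁ * x.2) ^ β) := by
    refine ⟨hWconv, ?_⟩
    rintro ⟨x₁, x₂⟩ ⟨hx1, hx2, hxl, hxr⟩ ⟨y₁, y₂⟩ ⟨hy1, hy2, hyl, hyr⟩ a b ha hb hab
    simp only [Prod.smul_mk, Prod.mk_add_mk, smul_eq_mul]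
    have hux : 0 ≤ d₂ * x₁ - d₁ * x₂ := by
      have u1 := mul_nonneg hd₂0.le hx1
      have u2 := mul_nonpos_of_nonpos_of_nonneg hd₁0.le hx2
      linarith
    have huy : 0 ≤ d₂ * y₁ - d₁ * y₂ := by
      have u1 := mul_nonneg hd₂0.le hy1
      have u2 := mul_nonpos_of_nonpos_of_nonneg hd₁0.le hy2
      linarith
    have key := convexOn_rpow hβ1 |>.2 (Set.mem_Ici.2 hux) (Set.mem_Ici.2 huy) ha hb hab
    simp only [smul_eq_mul] at key
    have harg : d₂ * (a * x₁ + b * y₁) - d₁ * (a * x₂ + b * y₂)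
        = a * (d₂ * x₁ - d₁ * x₂) + b * (d₂ * y₁ - d₁ * y₂) := by ring
    rw [harg]
    calc lam * (a * (d₂ * x₁ - d₁ * x₂) + b * (d₂ * y₁ - d₁ * y₂)) ^ β
        ≤ lam * (a * (d₂ * x₁ - d₁ * x₂) ^ β + b * (d₂ * y₁ - d₁ * y₂) ^ β) :=
          mul_le_mul_of_nonneg_left key hlam0.le
      _ = a * (lam * (d₂ * x₁ - d₁ * x₂) ^ β) + b * (lam * (d₂ * y₁ - d₁ * y₂) ^ β) := by
          ring
  refine ⟨hconvex, hmin, hray, ?_⟩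
  -- domination of convex minorants
  intro g hg hgle x hx
  obtain ⟨hx1, hx2, hl, hr⟩ := hx
  rcases eq_or_lt_of_le hx1 with h0 | h0
  · have hx2' : x.2 ≤ 0 := by rw [← h0, mul_zero] at hr; exact hr
    have hx20 : x.2 = p * x.1 := by rw [← h0, mul_zero]; linarith
    rw [hray x hx1 hx2 (Or.inl hx20)]
    exact hgle x ⟨hx1, hx2, hl, hr⟩
  · set tp := (p * x.1 - x.2) / (d₂ - d₁ * p) with htpdef
    set tq := (q * x.1 - x.2) / (d₂ - d₁ * q) with htqdef
    have htp0 : tp ≤ 0 := div_nonpos_of_nonpos_of_nonneg (by linarith) hup.le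
    have htq0 : 0 ≤ tq := div_nonneg (by linarith) huq.le
    set y : ℝ × ℝ := (x.1 + tp * d₁, x.2 + tp * d₂) with hydef
    set z : ℝ × ℝ := (x.1 + tq * d₁, x.2 + tq * d₂) with hzdef
    have hy2 : y.2 = p * y.1 := by
      show x.2 + tp * d₂ = p * (x.1 + tp * d₁)
      rw [htpdef]; have hne := hup.ne'; linear_combination div_mul_cancel₀ (p * x.1 - x.2) hne
    have hz2 : z.2 = q * z.1 := by
      show x.2 + tq * d₂ = q * (x.1 + tq * d₁)
      rw [htqdef]; have hne := huq.ne'; linear_combination div_mul_cancel₀ (q * x.1 - x.2) hne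
    have hy1 : 0 ≤ y.1 := by
      have : 0 ≤ (-tp) * (-d₁) := mul_nonneg (neg_nonneg.2 htp0) (neg_nonneg.2 hd₁0.le)
      show 0 ≤ x.1 + tp * d₁
      linarith
    have hy2' : 0 ≤ y.2 := by rw [hy2]; positivity
    have hz2' : 0 ≤ z.2 := by
      have : 0 ≤ tq * d₂ := mul_nonneg htq0 hd₂0.le
      show 0 ≤ x.2 + tq * d₂
      linarith
    have hz1 : 0 ≤ z.1 := by
      have h := hz2' ; rw [hz2] at h
      by_contra hcon
      push_neg at hcon
      have h2 := mul_pos hq (neg_pos.2 hcon)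
      linarith
    have hyW : y ∈ {x : ℝ × ℝ | 0 ≤ x.1 ∧ 0 ≤ x.2 ∧ p * x.1 ≤ x.2 ∧ x.2 ≤ q * x.1} :=
      ⟨hy1, hy2', le_of_eq hy2.symm, by rw [hy2]; exact mul_le_mul_of_nonneg_right hpq.le hy1⟩
    have hzW : z ∈ {x : ℝ × ℝ | 0 ≤ x.1 ∧ 0 ≤ x.2 ∧ p * x.1 ≤ x.2 ∧ x.2 ≤ q * x.1} :=
      ⟨hz1, hz2', by rw [hz2]; exact mul_le_mul_of_nonneg_right hpq.le hz1, le_of_eq hz2⟩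
    have hdiff : 0 < tq - tp := by
      rcases lt_or_eq_of_le htq0 with h | h
      · linarith
      · have hnum : q * x.1 - x.2 = 0 := by
          have h2 := h.symm
          rw [htqdef, div_eq_zero_iff] at h2
          rcases h2 with h' | h'
          · exact h'
          · exact absurd h' huq.ne'
        have hneg : p * x.1 - x.2 < 0 := by linarith [mul_pos hqp h0]
        have : tp < 0 := div_neg_of_neg_of_pos hneg hup
        linarith
    set α := tq / (tq - tp) with hαdef
    set ν := (-tp) / (tq - tp) with hνdef
    have hα : 0 ≤ α := div_nonneg htq0 hdiff.le
    have hν : 0 ≤ ν := div_nonneg (by linarith) hdiff.le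
    have hαν : α + ν = 1 := by
      rw [hαdef, hνdef]; field_simp; ring
    have hcoef : α * tp + ν * tq = 0 := by
      rw [hαdef, hνdef]; field_simp; ring
    have hxcomb : α • y + ν • z = x := by
      rw [hydef, hzdef]
      have e1' : α * (x.1 + tp * d₁) + ν * (x.1 + tq * d₁) = x.1 := by
        have : α * (x.1 + tp * d₁) + ν * (x.1 + tq * d₁)
            = (α + ν) * x.1 + (α * tp + ν * tq) * d₁ := by ring
        rw [this, hαν, hcoef]; ring
      have e2' : α * (x.2 + tp * d₂) + ν * (x.2 + tq * d₂) = x.2 := by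
        have : α * (x.2 + tp * d₂) + ν * (x.2 + tq * d₂)
            = (α + ν) * x.2 + (α * tp + ν * tq) * d₂ := by ring
        rw [this, hαν, hcoef]; ring
      ext
      · simpa using e1'
      · simpa using e2'
    have hgconv := hg.2 hyW hzW hα hν hαν
    rw [hxcomb] at hgconv
    simp only [smul_eq_mul] at hgconv
    have hfy : g y ≤ lam * (d₂ * x.1 - d₁ * x.2) ^ β := by
      have h1 := hgle y hyW
      rw [← hray y hy1 hy2' (Or.inl hy2)] at h1
      have : d₂ * y.1 - d₁ * y.2 = d₂ * x.1 - d₁ * x.2 := by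
        show d₂ * (x.1 + tp * d₁) - d₁ * (x.2 + tp * d₂) = d₂ * x.1 - d₁ * x.2
        ring
      rwa [this] at h1
    have hfz : g z ≤ lam * (d₂ * x.1 - d₁ * x.2) ^ β := by
      have h1 := hgle z hzW
      rw [← hray z hz1 hz2' (Or.inr hz2)] at h1
      have : d₂ * z.1 - d₁ * z.2 = d₂ * x.1 - d₁ * x.2 := by
        show d₂ * (x.1 + tq * d₁) - d₁ * (x.2 + tq * d₂) = d₂ * x.1 - d₁ * x.2
        ring
      rwa [this] at h1
    calc g x ≤ α * g y + ν * g z := hgconv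
      _ ≤ α * (lam * (d₂ * x.1 - d₁ * x.2) ^ β) + ν * (lam * (d₂ * x.1 - d₁ * x.2) ^ β) :=
          add_le_add (mul_le_mul_of_nonneg_left hfy hα) (mul_le_mul_of_nonneg_left hfz hν)
      _ = lam * (d₂ * x.1 - d₁ * x.2) ^ β := by
          rw [← add_mul, hαν, one_mul]
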